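/- Let A be a finite group acting on a finite set T, let G be a normal subgroup of A with A/G cyclic, and let aG be a generator of A/G. Then the number of A-orbits on T which are also G-orbits equals (1/#G) · Σ_{α ∈ aG} #T^α, where T^α denotes the set of fixed points of α on T. -/
import Mathlib

universe u v

open MulAction

section Aux
variable {A : Type u} [Group A] {T : Type v} [MulAction A T] (G : Subgroup A)

/-- The `G`-orbit of `t`, written elementwise. -/
def orbG (t : T) : Set T := {x : T | ∃ g ∈ G, g • t = x}

lemma orbG_eq_orbit (t : T) : orbG G t = MulAction.orbit G t := by
  ext x
  constructor
  · rintro ⟨g, hg, rfl⟩; exact ⟨⟨g, hg⟩, rfl⟩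
  · rintro ⟨g, rfl⟩; exact ⟨g, g.2, rfl⟩

lemma orbG_smul (t : T) {g : A} (hg : g ∈ G) : orbG G (g • t) = orbG G t := by
  ext x
  constructor
  · rintro ⟨h, hh, rfl⟩; exact ⟨h * g, mul_mem hh hg, (smul_smul h g t).symm⟩
  · rintro ⟨h, hh, rfl⟩
    exact ⟨h * g⁻¹, mul_mem hh (inv_mem hg), by rw [smul_smul, inv_mul_cancel_right]⟩
lemma natCard_setOf {T : Type v} [Fintype T] (p : T → Prop) [DecidablePred p] :
    Nat.card {t : T | p t} = (Finset.univ.filter p).card := by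
  rw [Nat.card_eq_fintype_card]
  exact Fintype.card_subtype p

end Aux

/-- Lemma 4.3. Let `A` be a finite group acting on a finite set
`T`, let `G` be a normal subgroup of `A` with `A/G` cyclic, and let `aG` be a
generator of `A/G`.  Then the number of `A`-orbits on `T` which are also `G`-orbits
equals `(1/#G) · Σ_{α ∈ aG} #T^α`, where `T^α` is the set of fixed points of `α` on
`T` (stated in the division-free form `#G · (number of common orbits) = Σ`). -/
theorem card_common_orbits_mul_card_eq_sum_fixedPoints
    {A : Type u} [Group A] [Finite A] {T : Type v} [Finite T] [MulAction A T]
    (G : Subgroup A) [G.Normal] (a : A)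
    -- `aG` generates the (cyclic) quotient `A/G`:
    (hgen : ∀ σ : A ⧸ G, σ ∈ Subgroup.zpowers ((a : A) : A ⧸ G)) :
    Nat.card G *
        Nat.card {s : Set T // (∃ t : T, s = MulAction.orbit A t) ∧
          (∃ t : T, s = {x : T | ∃ g ∈ G, g • t = x})} =
      ∑ᶠ α ∈ {α : A | (α : A ⧸ G) = ((a : A) : A ⧸ G)},
        Nat.card {t : T | α • t = t} := by
  classical
  letI : Fintype A := Fintype.ofFinite A
  letI : Fintype T := Fintype.ofFinite T
  letI : Fintype (Set T) := Fintype.ofFinite _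
  set s : Finset A := Finset.univ.filter (fun α => (α : A ⧸ G) = ((a : A) : A ⧸ G)) with hs
  have hset : {α : A | (α : A ⧸ G) = ((a : A) : A ⧸ G)} = (s : Set A) := by
    ext α; simp [hs]
  rw [hset, finsum_mem_coe_finset]
  have hcard : ∀ α : A, Nat.card {t : T | α • t = t}
      = (Finset.univ.filter fun t : T => α • t = t).card :=
    fun α => natCard_setOf _
  simp only [hcard]
  have swap : ∑ α ∈ s, (Finset.univ.filter fun t : T => α • t = t).card
      = ∑ t : T, (s.filter fun α => α • t = t).card := by
    simp_rw [Finset.card_filter]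
    exact Finset.sum_comm
  rw [swap]
  have key : ∀ t : T, (s.filter fun α => α • t = t).card =
      if MulAction.orbit A t = orbG G t then Nat.card (MulAction.stabilizer G t) else 0 := by
    intro t
    by_cases h : ∃ α0 : A, ((α0 : A ⧸ G) = ((a : A) : A ⧸ G)) ∧ α0 • t = t
    · obtain ⟨α0, hq, hfix⟩ := h
      have horb : MulAction.orbit A t = orbG G t := by
        ext x
        constructor
        · rintro ⟨β, rfl⟩
          obtain ⟨n, hn⟩ := Subgroup.mem_zpowers_iff.mp (hgen (β : A ⧸ G))
          have h1 : ((α0 ^ n : A) : A ⧸ G) = (β : A ⧸ G) := by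
            rw [← hn, ← hq]
            exact QuotientGroup.mk_zpow G α0 n
          have h2 : (α0 ^ n)⁻¹ * β ∈ G := (QuotientGroup.eq).mp h1
          have h3 : β * (α0 ^ n)⁻¹ ∈ G := by
            have := (‹G.Normal›).conj_mem _ h2 (α0 ^ n)
            simpa [mul_inv_cancel_left] using this
          have hfixn : (α0 ^ n) • t = t := (MulAction.stabilizer A t).zpow_mem hfix n
          have hinv : (α0 ^ n)⁻¹ • t = t := by rw [inv_smul_eq_iff, hfixn]
          exact ⟨β * (α0 ^ n)⁻¹, h3, by rw [mul_smul, hinv]⟩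
        · rintro ⟨g, hg, rfl⟩; exact MulAction.mem_orbit t g
      rw [if_pos horb, ← Fintype.card_coe, ← Nat.card_eq_fintype_card]
      have memfilter : ∀ α : A, α ∈ s.filter (fun α => α • t = t) ↔
          (((α : A ⧸ G) = ((a : A) : A ⧸ G)) ∧ α • t = t) := by
        intro α; simp [hs]
      refine Nat.card_congr ?_
      refine
        { toFun := fun x => ⟨⟨α0⁻¹ * x.1,
            (QuotientGroup.eq).mp (hq.trans ((memfilter _).mp x.2).1.symm)⟩, ?_⟩
          invFun := fun y => ⟨α0 * y.1.1, ?_⟩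
          left_inv := ?_
          right_inv := ?_ }
      · have hx := (memfilter _).mp x.2
        refine MulAction.mem_stabilizer_iff.mpr ?_
        show (α0⁻¹ * x.1) • t = t
        rw [mul_smul, hx.2]
        exact inv_smul_eq_iff.mpr hfix.symm
      · refine (memfilter _).mpr ⟨?_, ?_⟩
        · have h1 : ((y.1.1 : A) : A ⧸ G) = 1 := (QuotientGroup.eq_one_iff _).mpr y.1.2
          rw [QuotientGroup.mk_mul, h1, mul_one, hq]
        · have hyt : (y.1.1 : A) • t = t := y.2
          rw [mul_smul, hyt, hfix]
      · intro x
        exact Subtype.ext (by simp)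
      · intro y
        exact Subtype.ext (Subtype.ext (by simp))
    · have hfe : s.filter (fun α => α • t = t) = ∅ := by
        rw [Finset.filter_eq_empty_iff]; intro α hα hfixα
        exact h ⟨α, by simpa [hs] using hα, hfixα⟩
      rw [hfe, Finset.card_empty, if_neg]
      intro horb
      have hmem : a • t ∈ orbG G t := horb ▸ MulAction.mem_orbit t a
      obtain ⟨g, hg, hgt⟩ := hmem
      refine h ⟨g⁻¹ * a, ?_, ?_⟩
      · rw [QuotientGroup.eq]
        have := Subgroup.Normal.conj_mem' ‹G.Normal› g hg a
        simpa [mul_inv_rev, mul_assoc] using this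
      · rw [mul_smul, ← hgt, inv_smul_smul]
  simp only [key]
  rw [← Finset.sum_filter]
  set C : Finset T := Finset.univ.filter (fun t => MulAction.orbit A t = orbG G t) with hC
  set P : Finset (Set T) := Finset.univ.filter
    (fun sOrb => (∃ t : T, sOrb = MulAction.orbit A t) ∧ (∃ t : T, sOrb = orbG G t)) with hP
  have maps : ∀ t ∈ C, MulAction.orbit A t ∈ P := by
    intro t ht
    exact Finset.mem_filter.mpr ⟨Finset.mem_univ _, ⟨t, rfl⟩, ⟨t, (Finset.mem_filter.mp ht).2⟩⟩
  have fib := Finset.sum_fiberwise_of_maps_to maps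
    (fun t => Nat.card (MulAction.stabilizer G t))
  have perO : ∀ O ∈ P, ∑ t ∈ C.filter (fun t => MulAction.orbit A t = O),
      Nat.card (MulAction.stabilizer G t) = Nat.card G := by
    intro O hO
    obtain ⟨-, ⟨t0, rfl⟩, t1, hO1⟩ := Finset.mem_filter.mp hO
    have ht1mem : t1 ∈ MulAction.orbit A t0 := by
      rw [hO1]; exact ⟨1, one_mem G, one_smul _ _⟩
    have horb01 : MulAction.orbit A t1 = MulAction.orbit A t0 := MulAction.orbit_eq_iff.mpr ht1mem
    have hcommon1 : MulAction.orbit A t1 = orbG G t1 := horb01.trans hO1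
    have hfilter : C.filter (fun t => MulAction.orbit A t = MulAction.orbit A t0)
        = Finset.univ.filter (fun t => t ∈ orbG G t1) := by
      ext t
      simp only [hC, Finset.mem_filter, Finset.mem_univ, true_and]
      constructor
      · rintro ⟨hc, he⟩
        have : t ∈ MulAction.orbit A t0 := he ▸ MulAction.mem_orbit_self t
        rwa [hO1] at this
      · rintro ⟨g, hg, rfl⟩
        refine ⟨?_, ?_⟩
        · rw [orbG_smul G t1 hg, MulAction.orbit_smul, hcommon1]
        · rw [MulAction.orbit_smul, horb01]
    rw [hfilter]
    have hconst : ∀ t ∈ Finset.univ.filter (fun t => t ∈ orbG G t1),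
        Nat.card (MulAction.stabilizer G t) = Nat.card (MulAction.stabilizer G t1) := by
      intro t ht
      obtain ⟨g, hg, rfl⟩ := (Finset.mem_filter.mp ht).2
      rw [show g • t1 = (⟨g, hg⟩ : G) • t1 from rfl,
        MulAction.stabilizer_smul_eq_stabilizer_map_conj]
      exact (Nat.card_congr
        (Subgroup.equivMapOfInjective _ _ (MulAut.conj (⟨g, hg⟩ : G)).injective).toEquiv).symm
    rw [Finset.sum_congr rfl hconst, Finset.sum_const, smul_eq_mul]
    have hcardorb : (Finset.univ.filter (fun t => t ∈ orbG G t1)).card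
        = Nat.card (MulAction.orbit G t1) := by
      rw [← natCard_setOf]
      simp only [Set.setOf_mem_eq, orbG_eq_orbit]
    rw [hcardorb, Nat.card_congr (MulAction.orbitEquivQuotientStabilizer G t1)]
    exact (Subgroup.card_eq_card_quotient_mul_card_subgroup _).symm
  rw [← fib, Finset.sum_congr rfl perO, Finset.sum_const, smul_eq_mul]
  have hΩ : Nat.card {sOrb : Set T // (∃ t : T, sOrb = MulAction.orbit A t) ∧
      (∃ t : T, sOrb = {x : T | ∃ g ∈ G, g • t = x})} = P.card := by
    rw [hP]
    exact natCard_setOf _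
  rw [hΩ, mul_comm]
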